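/- Suppose that for Lebesgue-almost every t in the set {t ∈ [0,1] : Γ(t) < min{t, φ(t)}}, both Γ and φ are differentiable at t and Γ'(t) ∈ {0, 1 + φ'(t)}. Then the φ-splice C₂ ▵_φ C₁ is a copula. -/

import Mathlib

open Set MeasureTheory
open Filter Topology
open scoped ENNReal

/-- `Γ̂(t) = t - Γ(t)`. -/
def Ghat (Γ : ℝ → ℝ) : ℝ → ℝ := fun t => t - Γ t

/-- `Γ̃(t) = φ(t) - Γ(t)`. -/
def Gtil (φ Γ : ℝ → ℝ) : ℝ → ℝ := fun t => φ t - Γ t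

/-- The (signed) total variation `V_a^b(f)` of `f` on `[a, b] ⊆ [0, 1]`, with
the conventions `V_b^a(f) = -V_a^b(f)` and `V_a^a(f) = 0`. -/
noncomputable def sV (f : ℝ → ℝ) (a b : ℝ) : ℝ := variationOnFromTo f (Set.Icc 0 1) a b

/-- `f₁(x, y) = x - (1/2) (V_{φ⁻¹(y)}^x(Γ̂) + Γ̂(x) + Γ̂(φ⁻¹(y)))`, where `ψ = φ⁻¹`. -/
noncomputable def f1 (ψ Γ : ℝ → ℝ) (x y : ℝ) : ℝ :=
  x - (1/2) * (sV (Ghat Γ) (ψ y) x + Ghat Γ x + Ghat Γ (ψ y))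

/-- `f₂(x, y) = y - (1/2) (V_x^{φ⁻¹(y)}(Γ̃) + Γ̃(x) + Γ̃(φ⁻¹(y)))`, where `ψ = φ⁻¹`. -/
noncomputable def f2 (φ ψ Γ : ℝ → ℝ) (x y : ℝ) : ℝ :=
  y - (1/2) * (sV (Gtil φ Γ) x (ψ y) + Gtil φ Γ x + Gtil φ Γ (ψ y))

/-- `C₁(x, y) = min {x, y, f₁(x, y)}`. -/
noncomputable def C1 (ψ Γ : ℝ → ℝ) (x y : ℝ) : ℝ := min x (min y (f1 ψ Γ x y))

/-- `C₂(x, y) = min {x, y, f₂(x, y)}`. -/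
noncomputable def C2 (φ ψ Γ : ℝ → ℝ) (x y : ℝ) : ℝ := min x (min y (f2 φ ψ Γ x y))

/-- The φ-splice `C₂ ▵_φ C₁`: equal to `C₁` when `y ≤ φ(x)`, to `C₂` when `y ≥ φ(x)`. -/
noncomputable def splice (φ ψ Γ : ℝ → ℝ) (x y : ℝ) : ℝ :=
  if y ≤ φ x then C1 ψ Γ x y else C2 φ ψ Γ x y

/-- A copula on `[0,1]²`: boundary conditions and 2-increasingness. -/
def IsCopula (C : ℝ → ℝ → ℝ) : Prop :=
  (∀ x ∈ Set.Icc (0:ℝ) 1, ∀ y ∈ Set.Icc (0:ℝ) 1, C x y ∈ Set.Icc (0:ℝ) 1) ∧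
  (∀ x ∈ Set.Icc (0:ℝ) 1, C x 0 = 0 ∧ C 0 x = 0 ∧ C x 1 = x ∧ C 1 x = x) ∧
  (∀ x₁ x₂ y₁ y₂ : ℝ, x₁ ∈ Set.Icc (0:ℝ) 1 → x₂ ∈ Set.Icc (0:ℝ) 1 →
    y₁ ∈ Set.Icc (0:ℝ) 1 → y₂ ∈ Set.Icc (0:ℝ) 1 → x₁ ≤ x₂ → y₁ ≤ y₂ →
    0 ≤ C x₂ y₂ - C x₂ y₁ - C x₁ y₂ + C x₁ y₁)

/-- The greatest quasi-copula `A_Γ` with curvilinear section `Γ` (`ψ = φ⁻¹`). -/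
noncomputable def AG (φ ψ Γ : ℝ → ℝ) (x y : ℝ) : ℝ :=
  if y ≤ φ x then min y (x - sSup (Ghat Γ '' Set.Icc (ψ y) x))
  else min x (y - sSup (Gtil φ Γ '' Set.Icc x (ψ y)))

-- Auxiliary lemmas
section Aux

lemma lemA {x₁ x₂ y₁ y₂ m₁₁ m₂₁ m₁₂ m₂₂ : ℝ} (hx : x₁ ≤ x₂) (hy : y₁ ≤ y₂)
    (hmod : m₂₂ - m₁₂ = m₂₁ - m₁₁)
    (hu0 : 0 ≤ m₂₁ - m₁₁) (hux : m₂₁ - m₁₁ ≤ x₂ - x₁)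
    (hv0 : 0 ≤ m₁₂ - m₁₁) (hvy : m₁₂ - m₁₁ ≤ y₂ - y₁) :
    0 ≤ min x₂ (min y₂ m₂₂) - min x₁ (min y₂ m₁₂) - min x₂ (min y₁ m₂₁) + min x₁ (min y₁ m₁₁) := by
  simp only [min_def]
  split_ifs <;> linarith

lemma evar_le_aux {f g : ℝ → ℝ} {a b : ℝ} (ha : a ∈ Icc (0:ℝ) 1) (hb : b ∈ Icc (0:ℝ) 1)
    (h : ∀ x ∈ Icc (0:ℝ) 1, ∀ y ∈ Icc (0:ℝ) 1, x ≤ y → |f y - f x| ≤ g y - g x) :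
    eVariationOn f (Icc 0 1 ∩ Icc a b) ≤ ENNReal.ofReal (g b - g a) := by
  apply iSup_le
  rintro ⟨n, u, hu, us⟩
  have husI : ∀ i, u i ∈ Icc (0:ℝ) 1 := fun i => (us i).1
  have husab : ∀ i, u i ∈ Icc a b := fun i => (us i).2
  calc ∑ i ∈ Finset.range n, edist (f (u (i+1))) (f (u i))
      = ∑ i ∈ Finset.range n, ENNReal.ofReal (|f (u (i+1)) - f (u i)|) := by
        refine Finset.sum_congr rfl fun i _ => ?_
        rw [edist_dist, Real.dist_eq]
    _ ≤ ∑ i ∈ Finset.range n, ENNReal.ofReal (g (u (i+1)) - g (u i)) := by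
        refine Finset.sum_le_sum fun i _ => ENNReal.ofReal_le_ofReal ?_
        exact h _ (husI i) _ (husI (i+1)) (hu (Nat.le_succ i))
    _ = ENNReal.ofReal (∑ i ∈ Finset.range n, (g (u (i+1)) - g (u i))) := by
        rw [ENNReal.ofReal_sum_of_nonneg]
        intro i _
        exact le_trans (abs_nonneg _) (h _ (husI i) _ (husI (i+1)) (hu (Nat.le_succ i)))
    _ = ENNReal.ofReal (g (u n) - g (u 0)) := by rw [Finset.sum_range_sub (fun i => g (u i))]
    _ ≤ ENNReal.ofReal (g b - g a) := by
        apply ENNReal.ofReal_le_ofReal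
        have h1 : |f b - f (u n)| ≤ g b - g (u n) := h _ (husI n) _ hb (husab n).2
        have h2 : |f (u 0) - f a| ≤ g (u 0) - g a := h _ ha _ (husI 0) (husab 0).1
        have := abs_nonneg (f b - f (u n)); have := abs_nonneg (f (u 0) - f a)
        linarith

lemma vft_le {f g : ℝ → ℝ} {a b : ℝ} (ha : a ∈ Icc (0:ℝ) 1) (hb : b ∈ Icc (0:ℝ) 1)
    (hab : a ≤ b)
    (h : ∀ x ∈ Icc (0:ℝ) 1, ∀ y ∈ Icc (0:ℝ) 1, x ≤ y → |f y - f x| ≤ g y - g x) :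
    variationOnFromTo f (Icc 0 1) a b ≤ g b - g a := by
  rw [variationOnFromTo.eq_of_le _ _ hab]
  refine ENNReal.toReal_le_of_le_ofReal ?_ (evar_le_aux ha hb h)
  have := h _ ha _ hb hab
  have := abs_nonneg (f b - f a)
  linarith

lemma bv_of_bound {f g : ℝ → ℝ}
    (h : ∀ x ∈ Icc (0:ℝ) 1, ∀ y ∈ Icc (0:ℝ) 1, x ≤ y → |f y - f x| ≤ g y - g x) :
    LocallyBoundedVariationOn f (Icc (0:ℝ) 1) := by
  have hBV : BoundedVariationOn f (Icc (0:ℝ) 1) := by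
    have := evar_le_aux (f := f) (g := g) (left_mem_Icc.2 zero_le_one)
      (right_mem_Icc.2 zero_le_one) h
    rw [Set.inter_self] at this
    exact ne_top_of_le_ne_top ENNReal.ofReal_ne_top this
  exact fun a b _ _ => hBV.mono inter_subset_left

lemma abs_le_vft {f : ℝ → ℝ} (hf : LocallyBoundedVariationOn f (Icc (0:ℝ) 1)) {a b : ℝ}
    (ha : a ∈ Icc (0:ℝ) 1) (hb : b ∈ Icc (0:ℝ) 1) (hab : a ≤ b) :
    |f b - f a| ≤ variationOnFromTo f (Icc 0 1) a b := by
  rw [variationOnFromTo.eq_of_le _ _ hab]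
  have h := eVariationOn.edist_le (s := Icc 0 1 ∩ Icc a b) f (x := a) (y := b)
    ⟨ha, ⟨le_rfl, hab⟩⟩ ⟨hb, ⟨hab, le_rfl⟩⟩
  rw [edist_dist, Real.dist_eq, abs_sub_comm] at h
  exact (ENNReal.ofReal_le_iff_le_toReal (hf a b ha hb)).1 h

lemma deriv_nonneg_right {h : ℝ → ℝ} {d x b : ℝ} (hd : HasDerivAt h d x) (hxb : x < b)
    (hm : ∀ v, x < v → v < b → h x ≤ h v) : 0 ≤ d := by
  have h1 : Tendsto (slope h x) (𝓝[>] x) (𝓝 d) :=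
    (hasDerivAt_iff_tendsto_slope.1 hd).mono_left
      (nhdsWithin_mono x fun y hy => ne_of_gt hy)
  refine ge_of_tendsto h1 ?_
  filter_upwards [Ioo_mem_nhdsGT hxb] with v hv
  rw [slope_def_field]
  exact div_nonneg (sub_nonneg.2 (hm v hv.1 hv.2)) (sub_nonneg.2 hv.1.le)

lemma key_ineq (φ Γ : ℝ → ℝ)
    (hderiv : ∀ᵐ t ∂(volume : Measure ℝ), (t ∈ Set.Icc (0:ℝ) 1 ∧ Γ t < min t (φ t)) →
      ∃ dφ dΓ : ℝ, HasDerivAt φ dφ t ∧ HasDerivAt Γ dΓ t ∧ (dΓ = 0 ∨ dΓ = 1 + dφ))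
    (hBV1 : LocallyBoundedVariationOn (Ghat Γ) (Icc (0:ℝ) 1))
    (hBV2 : LocallyBoundedVariationOn (Gtil φ Γ) (Icc (0:ℝ) 1))
    {s t : ℝ} (hs : s ∈ Icc (0:ℝ) 1) (ht : t ∈ Icc (0:ℝ) 1) (hst : s ≤ t)
    (hlt : ∀ u ∈ Icc s t, Γ u < u ∧ Γ u < φ u) :
    t - s ≤ (sV (Ghat Γ) s t + (Ghat Γ t - Ghat Γ s)) / 2
      + (sV (Gtil φ Γ) s t - (Gtil φ Γ t - Gtil φ Γ s)) / 2 := by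
  classical
  set c : ℝ → ℝ := fun u => max s (min u t) with hc
  have hcmem : ∀ u, c u ∈ Icc (0:ℝ) 1 := by
    intro u
    constructor
    · exact le_trans hs.1 (le_max_left _ _)
    · exact max_le hs.2 (le_trans (min_le_right _ _) ht.2)
  have hcmono : Monotone c := fun u v huv =>
    max_le_max le_rfl (min_le_min huv le_rfl)
  have hceq : ∀ w, s ≤ w → w ≤ t → c w = w := by
    intro w h1 h2
    simp only [hc]
    rw [min_eq_left h2, max_eq_right h1]
  set m : ℝ → ℝ := fun u =>
    (sV (Ghat Γ) s (c u) + (Ghat Γ (c u) - Ghat Γ s)) / 2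
      + (sV (Gtil φ Γ) s (c u) - (Gtil φ Γ (c u) - Gtil φ Γ s)) / 2 with hm
  have hMdiff : ∀ u v : ℝ, u ≤ v → m v - m u =
      (sV (Ghat Γ) (c u) (c v) + (Ghat Γ (c v) - Ghat Γ (c u))) / 2
        + (sV (Gtil φ Γ) (c u) (c v) - (Gtil φ Γ (c v) - Gtil φ Γ (c u))) / 2 := by
    intro u v huv
    have h1 : sV (Ghat Γ) s (c u) + sV (Ghat Γ) (c u) (c v) = sV (Ghat Γ) s (c v) :=
      variationOnFromTo.add hBV1 hs (hcmem u) (hcmem v)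
    have h2 : sV (Gtil φ Γ) s (c u) + sV (Gtil φ Γ) (c u) (c v) = sV (Gtil φ Γ) s (c v) :=
      variationOnFromTo.add hBV2 hs (hcmem u) (hcmem v)
    simp only [hm]
    linarith
  have hbnd : ∀ u v : ℝ, u ≤ v →
      (0 ≤ m v - m u ∧ Ghat Γ (c v) - Ghat Γ (c u) ≤ m v - m u ∧
        Gtil φ Γ (c u) - Gtil φ Γ (c v) ≤ m v - m u) := by
    intro u v huv
    rw [hMdiff u v huv]
    have l1 := abs_le_vft hBV1 (hcmem u) (hcmem v) (hcmono huv)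
    have l2 := abs_le_vft hBV2 (hcmem u) (hcmem v) (hcmono huv)
    have l1a := (le_abs_self (Ghat Γ (c v) - Ghat Γ (c u))).trans l1
    have l1b' := (neg_le_abs (Ghat Γ (c v) - Ghat Γ (c u))).trans l1
    have l2a := (le_abs_self (Gtil φ Γ (c v) - Gtil φ Γ (c u))).trans l2
    have l2b' := (neg_le_abs (Gtil φ Γ (c v) - Gtil φ Γ (c u))).trans l2
    refine ⟨by simp only [sV] at *; linarith, by simp only [sV] at *; linarith,
      by simp only [sV] at *; linarith⟩
  have hmono : Monotone m := fun u v huv => sub_nonneg.1 (hbnd u v huv).1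
  have hae : ∀ᵐ x ∂(volume : Measure ℝ), x ∈ Ioo s t →
      (1:ℝ≥0∞) ≤ Measure.rnDeriv hmono.stieltjesFunction.measure volume x := by
    filter_upwards [hmono.ae_hasDerivAt, hderiv] with x hdm hdx hx
    have hxs : s ≤ x := hx.1.le
    have hxt : x ≤ t := hx.2.le
    have hxI : x ∈ Icc (0:ℝ) 1 := ⟨hs.1.trans hxs, hxt.trans ht.2⟩
    obtain ⟨dφ, dΓ, hφd, hΓd, hcase⟩ :=
      hdx ⟨hxI, lt_min (hlt x ⟨hxs, hxt⟩).1 (hlt x ⟨hxs, hxt⟩).2⟩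
    have hcx : c x = x := hceq x hxs hxt
    have h1d : (1:ℝ) ≤ (Measure.rnDeriv hmono.stieltjesFunction.measure volume x).toReal := by
      rcases hcase with h0 | h1
      · have hGh : HasDerivAt (Ghat Γ) 1 x := by
          have := (hasDerivAt_id x).sub hΓd
          rw [h0, sub_zero] at this
          exact this
        have hcomp := deriv_nonneg_right (h := fun u => m u - Ghat Γ u)
          (hdm.sub hGh) hx.2 ?_
        · linarith
        · intro v hv1 hv2
          have hb := (hbnd x v hv1.le).2.1
          have hcv : c v = v := hceq v (hxs.trans hv1.le) hv2.le
          rw [hcx, hcv] at hb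
          linarith
      · have hGt : HasDerivAt (Gtil φ Γ) (-1) x := by
          have := hφd.sub hΓd
          rw [h1] at this
          have he : dφ - (1 + dφ) = -1 := by ring
          rw [he] at this
          exact this
        have hcomp := deriv_nonneg_right (h := fun u => m u + Gtil φ Γ u)
          (hdm.add hGt) hx.2 ?_
        · linarith
        · intro v hv1 hv2
          have hb := (hbnd x v hv1.le).2.2
          have hcv : c v = v := hceq v (hxs.trans hv1.le) hv2.le
          rw [hcx, hcv] at hb
          linarith
    by_cases htop : Measure.rnDeriv hmono.stieltjesFunction.measure volume x = ⊤
    · simp [htop]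
    · calc (1:ℝ≥0∞) = ENNReal.ofReal 1 := by simp
        _ ≤ _ := ENNReal.ofReal_le_of_le_toReal h1d
  have hμ : (volume : Measure ℝ) (Ioo s t) ≤ hmono.stieltjesFunction.measure (Ioc s t) := by
    calc (volume : Measure ℝ) (Ioo s t) = ∫⁻ _ in Ioo s t, 1 ∂volume := (setLIntegral_one _).symm
      _ ≤ ∫⁻ x in Ioo s t, hmono.stieltjesFunction.measure.rnDeriv volume x ∂volume := by
          refine setLIntegral_mono_ae
            (Measure.measurable_rnDeriv _ volume).aemeasurable ?_
          filter_upwards [hae] with x hx hxI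
          exact hx hxI
      _ = (volume.withDensity (hmono.stieltjesFunction.measure.rnDeriv volume)) (Ioo s t) :=
          (withDensity_apply _ measurableSet_Ioo).symm
      _ ≤ hmono.stieltjesFunction.measure (Ioo s t) :=
          Measure.le_iff'.1 (Measure.withDensity_rnDeriv_le _ _) _
      _ ≤ hmono.stieltjesFunction.measure (Ioc s t) := measure_mono Ioo_subset_Ioc_self
  have hgs : m s ≤ hmono.stieltjesFunction s := by
    rw [hmono.stieltjesFunction_eq]
    exact hmono.le_rightLim le_rfl
  have hgt : hmono.stieltjesFunction t ≤ m t := by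
    rw [hmono.stieltjesFunction_eq]
    refine (hmono.rightLim_le (lt_add_one t)).trans (le_of_eq ?_)
    have hcc : c (t+1) = c t := by
      simp only [hc]
      rw [min_eq_right (by linarith : t ≤ t+1), min_self]
    simp only [hm, hcc]
  rw [Real.volume_Ioo, StieltjesFunction.measure_Ioc] at hμ
  have hms : m s = 0 := by
    simp only [hm, hceq s le_rfl hst]
    simp [sV, variationOnFromTo.self]
  have hmt : m t = (sV (Ghat Γ) s t + (Ghat Γ t - Ghat Γ s)) / 2
      + (sV (Gtil φ Γ) s t - (Gtil φ Γ t - Gtil φ Γ s)) / 2 := by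
    simp only [hm, hceq t hst le_rfl]
  have hfin : t - s ≤ m t - m s := by
    rcases le_or_gt (t - s) 0 with hts | hts
    · have := hmono hst
      linarith
    · rcases ENNReal.ofReal_le_ofReal_iff'.1 hμ with h2 | h2
      · linarith
      · linarith
  rw [hms, hmt] at hfin
  linarith

end Aux

theorem stmt_15
    (φ Γ : ℝ → ℝ)
    (hφcont : ContinuousOn φ (Set.Icc 0 1))
    (hφmono : StrictMonoOn φ (Set.Icc 0 1))
    (hφ0 : φ 0 = 0) (hφ1 : φ 1 = 1)
    (hΓrange : ∀ t ∈ Set.Icc (0:ℝ) 1, max 0 (t + φ t - 1) ≤ Γ t ∧ Γ t ≤ min t (φ t))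
    (hΓlip : ∀ t₁ t₂ : ℝ, t₁ ∈ Set.Icc (0:ℝ) 1 → t₂ ∈ Set.Icc (0:ℝ) 1 → t₁ ≤ t₂ →
      0 ≤ Γ t₂ - Γ t₁ ∧ Γ t₂ - Γ t₁ ≤ (t₂ - t₁) + (φ t₂ - φ t₁))
    (ψ : ℝ → ℝ)
    (hψmem : ∀ y ∈ Set.Icc (0:ℝ) 1, ψ y ∈ Set.Icc (0:ℝ) 1)
    (hψφ : ∀ t ∈ Set.Icc (0:ℝ) 1, ψ (φ t) = t)
    (hφψ : ∀ y ∈ Set.Icc (0:ℝ) 1, φ (ψ y) = y)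
    (hderiv : ∀ᵐ t ∂(volume : Measure ℝ), (t ∈ Set.Icc (0:ℝ) 1 ∧ Γ t < min t (φ t)) →
      ∃ dφ dΓ : ℝ, HasDerivAt φ dφ t ∧ HasDerivAt Γ dΓ t ∧ (dΓ = 0 ∨ dΓ = 1 + dφ)) :
    IsCopula (splice φ ψ Γ) := by
  have hI0 : (0:ℝ) ∈ Icc (0:ℝ) 1 := ⟨le_rfl, zero_le_one⟩
  have hI1 : (1:ℝ) ∈ Icc (0:ℝ) 1 := ⟨zero_le_one, le_rfl⟩
  have hφm : MonotoneOn φ (Icc (0:ℝ) 1) := hφmono.monotoneOn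
  have hφmem : ∀ x ∈ Icc (0:ℝ) 1, φ x ∈ Icc (0:ℝ) 1 := by
    intro x hx
    constructor
    · rw [← hφ0]; exact hφm hI0 hx hx.1
    · rw [← hφ1]; exact hφm hx hI1 hx.2
  have eGh : ∀ w, Ghat Γ w = w - Γ w := fun _ => rfl
  have eGt : ∀ w, Gtil φ Γ w = φ w - Γ w := fun _ => rfl
  have hΓ0 : Γ 0 = 0 := le_antisymm ((hΓrange 0 hI0).2.trans (min_le_left _ _))
    (le_trans (le_max_left _ _) (hΓrange 0 hI0).1)
  have hΓ1 : Γ 1 = 1 := by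
    have h1 := (hΓrange 1 hI1).1
    rw [hφ1] at h1
    have h1' : (1:ℝ) ≤ Γ 1 := le_trans (by norm_num) h1
    exact le_antisymm ((hΓrange 1 hI1).2.trans (min_le_left _ _)) h1'
  have hΓnn : ∀ x ∈ Icc (0:ℝ) 1, 0 ≤ Γ x := by
    intro x hx
    exact le_trans (le_max_left _ _) (hΓrange x hx).1
  have hΓlex : ∀ x ∈ Icc (0:ℝ) 1, Γ x ≤ x ∧ Γ x ≤ φ x := by
    intro x hx
    have := (hΓrange x hx).2
    exact ⟨this.trans (min_le_left _ _), this.trans (min_le_right _ _)⟩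
  have hψ0 : ψ 0 = 0 := by
    have := hψφ 0 hI0
    rwa [hφ0] at this
  have hψ1 : ψ 1 = 1 := by
    have := hψφ 1 hI1
    rwa [hφ1] at this
  have hψm : ∀ y₁ ∈ Icc (0:ℝ) 1, ∀ y₂ ∈ Icc (0:ℝ) 1, y₁ ≤ y₂ → ψ y₁ ≤ ψ y₂ := by
    intro y₁ h₁ y₂ h₂ h
    by_contra hcon
    push_neg at hcon
    have := hφmono (hψmem y₂ h₂) (hψmem y₁ h₁) hcon
    rw [hφψ y₁ h₁, hφψ y₂ h₂] at this
    linarith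
  have hreg : ∀ x ∈ Icc (0:ℝ) 1, ∀ y ∈ Icc (0:ℝ) 1, (y ≤ φ x ↔ ψ y ≤ x) := by
    intro x hx y hy
    constructor
    · intro h
      have := hψm y hy (φ x) (hφmem x hx) h
      rwa [hψφ x hx] at this
    · intro h
      have := hφm (hψmem y hy) hx h
      rwa [hφψ y hy] at this
  -- increment (absolute value) bounds
  have habs1 : ∀ x ∈ Icc (0:ℝ) 1, ∀ y ∈ Icc (0:ℝ) 1, x ≤ y →
      |Ghat Γ y - Ghat Γ x| ≤ (fun u => u + Γ u) y - (fun u => u + Γ u) x := by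
    intro x hx y hy hxy
    have h1 := (hΓlip x y hx hy hxy).1
    simp only [eGh]
    rw [abs_le]
    exact ⟨by linarith, by linarith⟩
  have habs3 : ∀ x ∈ Icc (0:ℝ) 1, ∀ y ∈ Icc (0:ℝ) 1, x ≤ y →
      |Gtil φ Γ y - Gtil φ Γ x| ≤ (fun u => φ u + Γ u) y - (fun u => φ u + Γ u) x := by
    intro x hx y hy hxy
    have h1 := (hΓlip x y hx hy hxy).1
    have h3 := hφm hx hy hxy
    simp only [eGt]
    rw [abs_le]
    exact ⟨by linarith, by linarith⟩
  have hBV1 : LocallyBoundedVariationOn (Ghat Γ) (Icc (0:ℝ) 1) := bv_of_bound habs1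
  have hBV2 : LocallyBoundedVariationOn (Gtil φ Γ) (Icc (0:ℝ) 1) := bv_of_bound habs3
  have hLB1 : ∀ a ∈ Icc (0:ℝ) 1, ∀ b ∈ Icc (0:ℝ) 1, a ≤ b →
      |Ghat Γ b - Ghat Γ a| ≤ sV (Ghat Γ) a b := by
    intro a ha b hb hab
    simpa only [sV] using abs_le_vft hBV1 ha hb hab
  have hLB2 : ∀ a ∈ Icc (0:ℝ) 1, ∀ b ∈ Icc (0:ℝ) 1, a ≤ b →
      |Gtil φ Γ b - Gtil φ Γ a| ≤ sV (Gtil φ Γ) a b := by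
    intro a ha b hb hab
    simpa only [sV] using abs_le_vft hBV2 ha hb hab
  have hV1 : ∀ a ∈ Icc (0:ℝ) 1, ∀ b ∈ Icc (0:ℝ) 1, a ≤ b →
      sV (Ghat Γ) a b ≤ (b - a) + (Γ b - Γ a) := by
    intro a ha b hb hab
    have h := vft_le ha hb hab habs1
    simp only [sV]
    linarith
  have hV2 : ∀ a ∈ Icc (0:ℝ) 1, ∀ b ∈ Icc (0:ℝ) 1, a ≤ b →
      sV (Ghat Γ) a b ≤ 2*(φ b - φ a) + (b - a) - (Γ b - Γ a) := by
    intro a ha b hb hab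
    have h := vft_le (f := Ghat Γ) (g := fun u => 2*φ u + u - Γ u) ha hb hab ?_
    · simp only [sV]
      linarith
    · intro x hx y hy hxy
      have h1 := (hΓlip x y hx hy hxy).1
      have h2 := (hΓlip x y hx hy hxy).2
      have h3 := hφm hx hy hxy
      simp only [eGh]
      rw [abs_le]
      exact ⟨by linarith, by linarith⟩
  have hV3 : ∀ a ∈ Icc (0:ℝ) 1, ∀ b ∈ Icc (0:ℝ) 1, a ≤ b →
      sV (Gtil φ Γ) a b ≤ (φ b - φ a) + (Γ b - Γ a) := by
    intro a ha b hb hab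
    have h := vft_le ha hb hab habs3
    simp only [sV]
    linarith
  have hV4 : ∀ a ∈ Icc (0:ℝ) 1, ∀ b ∈ Icc (0:ℝ) 1, a ≤ b →
      sV (Gtil φ Γ) a b ≤ 2*(b - a) + (φ b - φ a) - (Γ b - Γ a) := by
    intro a ha b hb hab
    have h := vft_le (f := Gtil φ Γ) (g := fun u => 2*u + φ u - Γ u) ha hb hab ?_
    · simp only [sV]
      linarith
    · intro x hx y hy hxy
      have h1 := (hΓlip x y hx hy hxy).1
      have h2 := (hΓlip x y hx hy hxy).2
      have h3 := hφm hx hy hxy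
      simp only [eGt]
      rw [abs_le]
      exact ⟨by linarith, by linarith⟩
  have hadd1 : ∀ a ∈ Icc (0:ℝ) 1, ∀ b ∈ Icc (0:ℝ) 1, ∀ c ∈ Icc (0:ℝ) 1,
      sV (Ghat Γ) a b + sV (Ghat Γ) b c = sV (Ghat Γ) a c := by
    intro a ha b hb c hc
    exact variationOnFromTo.add hBV1 ha hb hc
  have hadd2 : ∀ a ∈ Icc (0:ℝ) 1, ∀ b ∈ Icc (0:ℝ) 1, ∀ c ∈ Icc (0:ℝ) 1,
      sV (Gtil φ Γ) a b + sV (Gtil φ Γ) b c = sV (Gtil φ Γ) a c := by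
    intro a ha b hb c hc
    exact variationOnFromTo.add hBV2 ha hb hc
  -- increments of f1, f2
  have hf1x : ∀ y ∈ Icc (0:ℝ) 1, ∀ x₁ ∈ Icc (0:ℝ) 1, ∀ x₂ ∈ Icc (0:ℝ) 1, x₁ ≤ x₂ →
      f1 ψ Γ x₂ y - f1 ψ Γ x₁ y
        = (x₂ - x₁) - (sV (Ghat Γ) x₁ x₂ + (Ghat Γ x₂ - Ghat Γ x₁))/2 := by
    intro y hy x₁ h₁ x₂ h₂ h
    have ha := hψmem y hy
    have hA := hadd1 _ ha _ h₁ _ h₂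
    simp only [f1]
    linarith
  have hf1y : ∀ x ∈ Icc (0:ℝ) 1, ∀ y₁ ∈ Icc (0:ℝ) 1, ∀ y₂ ∈ Icc (0:ℝ) 1, y₁ ≤ y₂ →
      f1 ψ Γ x y₂ - f1 ψ Γ x y₁
        = (sV (Ghat Γ) (ψ y₁) (ψ y₂) - (Ghat Γ (ψ y₂) - Ghat Γ (ψ y₁)))/2 := by
    intro x hx y₁ h₁ y₂ h₂ h
    have ha₁ := hψmem y₁ h₁
    have ha₂ := hψmem y₂ h₂
    have hA := hadd1 _ ha₁ _ ha₂ _ hx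
    simp only [f1]
    linarith
  have hf2x : ∀ y ∈ Icc (0:ℝ) 1, ∀ x₁ ∈ Icc (0:ℝ) 1, ∀ x₂ ∈ Icc (0:ℝ) 1, x₁ ≤ x₂ →
      f2 φ ψ Γ x₂ y - f2 φ ψ Γ x₁ y
        = (sV (Gtil φ Γ) x₁ x₂ - (Gtil φ Γ x₂ - Gtil φ Γ x₁))/2 := by
    intro y hy x₁ h₁ x₂ h₂ h
    have ha := hψmem y hy
    have hA := hadd2 _ h₁ _ h₂ _ ha
    simp only [f2]
    linarith
  have hf2y : ∀ x ∈ Icc (0:ℝ) 1, ∀ y₁ ∈ Icc (0:ℝ) 1, ∀ y₂ ∈ Icc (0:ℝ) 1, y₁ ≤ y₂ →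
      f2 φ ψ Γ x y₂ - f2 φ ψ Γ x y₁
        = (y₂ - y₁) - (sV (Gtil φ Γ) (ψ y₁) (ψ y₂) + (Gtil φ Γ (ψ y₂) - Gtil φ Γ (ψ y₁)))/2 := by
    intro x hx y₁ h₁ y₂ h₂ h
    have ha₁ := hψmem y₁ h₁
    have ha₂ := hψmem y₂ h₂
    have hA := hadd2 _ hx _ ha₁ _ ha₂
    simp only [f2]
    linarith
  -- 2-increasingness of C1 and C2
  have h2inc1 : ∀ x₁ ∈ Icc (0:ℝ) 1, ∀ x₂ ∈ Icc (0:ℝ) 1, ∀ y₁ ∈ Icc (0:ℝ) 1, ∀ y₂ ∈ Icc (0:ℝ) 1,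
      x₁ ≤ x₂ → y₁ ≤ y₂ →
      0 ≤ C1 ψ Γ x₂ y₂ - C1 ψ Γ x₁ y₂ - C1 ψ Γ x₂ y₁ + C1 ψ Γ x₁ y₁ := by
    intro x₁ hx₁ x₂ hx₂ y₁ hy₁ y₂ hy₂ hx hy
    have ha₁ := hψmem y₁ hy₁
    have ha₂ := hψmem y₂ hy₂
    have haa := hψm y₁ hy₁ y₂ hy₂ hy
    have e1 := hf1x y₂ hy₂ x₁ hx₁ x₂ hx₂ hx
    have e2 := hf1x y₁ hy₁ x₁ hx₁ x₂ hx₂ hx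
    have e3 := hf1y x₁ hx₁ y₁ hy₁ y₂ hy₂ hy
    have lb := abs_le.1 (hLB1 x₁ hx₁ x₂ hx₂ hx)
    have ub := hV1 x₁ hx₁ x₂ hx₂ hx
    have lb' := abs_le.1 (hLB1 _ ha₁ _ ha₂ haa)
    have ub' := hV2 _ ha₁ _ ha₂ haa
    have hyφ₁ : φ (ψ y₁) = y₁ := hφψ y₁ hy₁
    have hyφ₂ : φ (ψ y₂) = y₂ := hφψ y₂ hy₂
    have hΓm := (hΓlip _ _ hx₁ hx₂ hx).1
    have hΓm' := (hΓlip _ _ ha₁ ha₂ haa).1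
    simp only [C1]
    refine lemA hx hy ?_ ?_ ?_ ?_ ?_
    · rw [e1, e2]
    · rw [e2]
      simp only [eGh] at lb ub ⊢
      linarith [lb.2]
    · rw [e2]
      simp only [eGh] at lb ub ⊢
      linarith [lb.1]
    · rw [e3]
      simp only [eGh] at lb' ub' ⊢
      linarith [lb'.2]
    · rw [e3]
      simp only [eGh] at lb' ub' ⊢
      linarith [lb'.1, hyφ₁, hyφ₂]
  have h2inc2 : ∀ x₁ ∈ Icc (0:ℝ) 1, ∀ x₂ ∈ Icc (0:ℝ) 1, ∀ y₁ ∈ Icc (0:ℝ) 1, ∀ y₂ ∈ Icc (0:ℝ) 1,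
      x₁ ≤ x₂ → y₁ ≤ y₂ →
      0 ≤ C2 φ ψ Γ x₂ y₂ - C2 φ ψ Γ x₁ y₂ - C2 φ ψ Γ x₂ y₁ + C2 φ ψ Γ x₁ y₁ := by
    intro x₁ hx₁ x₂ hx₂ y₁ hy₁ y₂ hy₂ hx hy
    have ha₁ := hψmem y₁ hy₁
    have ha₂ := hψmem y₂ hy₂
    have haa := hψm y₁ hy₁ y₂ hy₂ hy
    have e1 := hf2x y₂ hy₂ x₁ hx₁ x₂ hx₂ hx
    have e2 := hf2x y₁ hy₁ x₁ hx₁ x₂ hx₂ hx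
    have e3 := hf2y x₁ hx₁ y₁ hy₁ y₂ hy₂ hy
    have lb := abs_le.1 (hLB2 x₁ hx₁ x₂ hx₂ hx)
    have ub := hV4 x₁ hx₁ x₂ hx₂ hx
    have lb' := abs_le.1 (hLB2 _ ha₁ _ ha₂ haa)
    have ub' := hV3 _ ha₁ _ ha₂ haa
    have hyφ₁ : φ (ψ y₁) = y₁ := hφψ y₁ hy₁
    have hyφ₂ : φ (ψ y₂) = y₂ := hφψ y₂ hy₂
    have hΓm := (hΓlip _ _ hx₁ hx₂ hx).1
    have hΓm' := (hΓlip _ _ ha₁ ha₂ haa).1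
    simp only [C2]
    refine lemA hx hy ?_ ?_ ?_ ?_ ?_
    · rw [e1, e2]
    · rw [e2]
      simp only [eGt] at lb ub ⊢
      linarith [lb.1]
    · rw [e2]
      simp only [eGt] at lb ub ⊢
      linarith [lb.2]
    · rw [e3]
      simp only [eGt] at lb' ub' ⊢
      linarith [lb'.2, hyφ₁, hyφ₂]
    · rw [e3]
      simp only [eGt] at lb' ub' ⊢
      linarith [lb'.1]
  -- values on the curve
  have hf1curve : ∀ x ∈ Icc (0:ℝ) 1, f1 ψ Γ x (φ x) = Γ x := by
    intro x hx
    have h0 : sV (Ghat Γ) x x = 0 := variationOnFromTo.self _ _ x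
    simp only [f1, hψφ x hx, h0, eGh]
    ring
  have hf2curve : ∀ x ∈ Icc (0:ℝ) 1, f2 φ ψ Γ x (φ x) = Γ x := by
    intro x hx
    have h0 : sV (Gtil φ Γ) x x = 0 := variationOnFromTo.self _ _ x
    simp only [f2, hψφ x hx, h0, eGt]
    ring
  have hC1curve : ∀ x ∈ Icc (0:ℝ) 1, C1 ψ Γ x (φ x) = Γ x := by
    intro x hx
    simp only [C1, hf1curve x hx]
    rw [min_eq_right (hΓlex x hx).2, min_eq_right (hΓlex x hx).1]
  have hC2curve : ∀ x ∈ Icc (0:ℝ) 1, C2 φ ψ Γ x (φ x) = Γ x := by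
    intro x hx
    simp only [C2, hf2curve x hx]
    rw [min_eq_right (hΓlex x hx).2, min_eq_right (hΓlex x hx).1]
  have hSreg1 : ∀ x y : ℝ, y ≤ φ x → splice φ ψ Γ x y = C1 ψ Γ x y := by
    intro x y h
    simp only [splice, if_pos h]
  have hSreg2 : ∀ x ∈ Icc (0:ℝ) 1, ∀ y : ℝ, φ x ≤ y → splice φ ψ Γ x y = C2 φ ψ Γ x y := by
    intro x hx y h
    by_cases h' : y ≤ φ x
    · have heq : y = φ x := le_antisymm h' h
      rw [heq, hSreg1 x (φ x) le_rfl, hC1curve x hx, hC2curve x hx]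
    · simp only [splice, if_neg h']
  -- lower bounds for f1, f2
  have hf1nn : ∀ x ∈ Icc (0:ℝ) 1, ∀ y ∈ Icc (0:ℝ) 1, ψ y ≤ x → Γ (ψ y) ≤ f1 ψ Γ x y := by
    intro x hx y hy h
    have ha := hψmem y hy
    have hv := hV1 _ ha _ hx h
    simp only [f1, eGh]
    linarith
  have hf2nn : ∀ x ∈ Icc (0:ℝ) 1, ∀ y ∈ Icc (0:ℝ) 1, x ≤ ψ y → Γ x ≤ f2 φ ψ Γ x y := by
    intro x hx y hy h
    have ha := hψmem y hy
    have hv := hV3 _ hx _ ha h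
    have hyφ : φ (ψ y) = y := hφψ y hy
    simp only [f2, eGt]
    linarith
  -- boundary values
  have hb1 : ∀ x ∈ Icc (0:ℝ) 1, splice φ ψ Γ x 0 = 0 := by
    intro x hx
    have h0 : (0:ℝ) ≤ φ x := (hφmem x hx).1
    rw [hSreg1 x 0 h0]
    have hψle : ψ 0 ≤ x := by rw [hψ0]; exact hx.1
    have hf := hf1nn x hx 0 hI0 hψle
    rw [hψ0, hΓ0] at hf
    simp only [C1]
    rw [min_eq_left hf, min_eq_right hx.1]
  have hb2 : ∀ y ∈ Icc (0:ℝ) 1, splice φ ψ Γ 0 y = 0 := by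
    intro y hy
    by_cases h : y ≤ φ 0
    · have heq : y = 0 := le_antisymm (by rwa [hφ0] at h) hy.1
      rw [heq]
      exact hb1 0 hI0
    · push_neg at h
      rw [hSreg2 0 hI0 y h.le]
      have hf := hf2nn 0 hI0 y hy (hψmem y hy).1
      rw [hΓ0] at hf
      simp only [C2]
      rw [min_eq_left (le_min hy.1 hf)]
  have hb3 : ∀ x ∈ Icc (0:ℝ) 1, splice φ ψ Γ x 1 = x := by
    intro x hx
    by_cases h : (1:ℝ) ≤ φ x
    · rw [hSreg1 x 1 h]
      have lb := abs_le.1 (hLB1 x hx 1 hI1 hx.2)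
      have hGh1 : Ghat Γ 1 = 0 := by rw [eGh, hΓ1]; ring
      have hswap : sV (Ghat Γ) 1 x = - sV (Ghat Γ) x 1 := by
        simp only [sV]
        exact variationOnFromTo.eq_neg_swap _ _ _ _
      have hxf1 : x ≤ f1 ψ Γ x 1 := by
        simp only [f1, hψ1, hswap, hGh1, eGh]
        rw [hGh1] at lb
        simp only [eGh] at lb
        linarith [lb.1]
      simp only [C1]
      rw [min_eq_left (le_min hx.2 hxf1)]
    · push_neg at h
      rw [hSreg2 x hx 1 h.le]
      have hv := hV4 x hx 1 hI1 hx.2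
      have hxf2 : x ≤ f2 φ ψ Γ x 1 := by
        simp only [f2, hψ1, eGt]
        rw [hφ1, hΓ1]
        rw [hφ1, hΓ1] at hv
        linarith
      simp only [C2]
      rw [min_eq_left (le_min hx.2 hxf2)]
  have hb4 : ∀ y ∈ Icc (0:ℝ) 1, splice φ ψ Γ 1 y = y := by
    intro y hy
    have h : y ≤ φ 1 := by rw [hφ1]; exact hy.2
    rw [hSreg1 1 y h]
    have ha := hψmem y hy
    have hv := hV2 _ ha _ hI1 ha.2
    have hyφ : φ (ψ y) = y := hφψ y hy
    have hyf1 : y ≤ f1 ψ Γ 1 y := by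
      simp only [f1, eGh]
      rw [hΓ1]
      rw [hφ1, hΓ1, hyφ] at hv
      linarith
    simp only [C1]
    rw [min_eq_left hyf1, min_eq_right hy.2]
  -- range
  have hrange : ∀ x ∈ Icc (0:ℝ) 1, ∀ y ∈ Icc (0:ℝ) 1, splice φ ψ Γ x y ∈ Icc (0:ℝ) 1 := by
    intro x hx y hy
    by_cases h : y ≤ φ x
    · rw [hSreg1 x y h]
      have ha := hψmem y hy
      have hax : ψ y ≤ x := (hreg x hx y hy).1 h
      have hf := hf1nn x hx y hy hax
      have hΓa := hΓnn _ ha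
      constructor
      · exact le_min hx.1 (le_min hy.1 (by linarith))
      · exact le_trans (min_le_left _ _) hx.2
    · push_neg at h
      rw [hSreg2 x hx y h.le]
      have hax : x ≤ ψ y := by
        by_contra hcon
        push_neg at hcon
        exact (not_le.2 h) ((hreg x hx y hy).2 hcon.le)
      have hf := hf2nn x hx y hy hax
      have hΓx := hΓnn x hx
      constructor
      · exact le_min hx.1 (le_min hy.1 (by linarith))
      · exact le_trans (min_le_left _ _) hx.2
  -- the middle rectangle inequality
  have hmid : ∀ s ∈ Icc (0:ℝ) 1, ∀ t ∈ Icc (0:ℝ) 1, s ≤ t →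
      C1 ψ Γ t (φ s) + C2 φ ψ Γ s (φ t) ≤ Γ s + Γ t := by
    intro s hs t ht hst
    by_contra hcon
    push_neg at hcon
    have hf1v : f1 ψ Γ t (φ s) = t - (sV (Ghat Γ) s t + Ghat Γ t + Ghat Γ s)/2 := by
      simp only [f1, hψφ s hs]
      ring
    have hf2v : f2 φ ψ Γ s (φ t) = φ t - (sV (Gtil φ Γ) s t + Gtil φ Γ s + Gtil φ Γ t)/2 := by
      simp only [f2, hψφ t ht]
      ring
    have hA1 : C1 ψ Γ t (φ s) ≤ f1 ψ Γ t (φ s) :=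
      le_trans (min_le_right _ _) (min_le_right _ _)
    have hA2 : C1 ψ Γ t (φ s) ≤ φ s := le_trans (min_le_right _ _) (min_le_left _ _)
    have hB1 : C2 φ ψ Γ s (φ t) ≤ f2 φ ψ Γ s (φ t) :=
      le_trans (min_le_right _ _) (min_le_right _ _)
    have hB2 : C2 φ ψ Γ s (φ t) ≤ s := min_le_left _ _
    have hlt : ∀ u ∈ Icc s t, Γ u < u ∧ Γ u < φ u := by
      intro u hu
      have huI : u ∈ Icc (0:ℝ) 1 := ⟨hs.1.trans hu.1, hu.2.trans ht.2⟩
      have hadds := hadd1 s hs u huI t ht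
      have l1 := abs_le.1 (hLB1 s hs u huI hu.1)
      have l2 := abs_le.1 (hLB1 u huI t ht hu.2)
      have hadds' := hadd2 s hs u huI t ht
      have l1' := abs_le.1 (hLB2 s hs u huI hu.1)
      have l2' := abs_le.1 (hLB2 u huI t ht hu.2)
      constructor
      · have h := hcon.trans_le (add_le_add hA1 hB2)
        rw [hf1v] at h
        simp only [eGh] at h l1 l2 ⊢
        linarith [l1.1, l2.2]
      · have h := hcon.trans_le (add_le_add hA2 hB1)
        rw [hf2v] at h
        simp only [eGt] at h l1' l2' ⊢
        linarith [l1'.1, l2'.2]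
    have hkey := key_ineq φ Γ hderiv hBV1 hBV2 hs ht hst hlt
    have h := hcon.trans_le (add_le_add hA1 hB1)
    rw [hf1v, hf2v] at h
    simp only [eGh, eGt] at hkey h
    linarith
  -- 2-increasingness of the splice
  have hmain : ∀ x₁ x₂ y₁ y₂ : ℝ, x₁ ∈ Icc (0:ℝ) 1 → x₂ ∈ Icc (0:ℝ) 1 →
      y₁ ∈ Icc (0:ℝ) 1 → y₂ ∈ Icc (0:ℝ) 1 → x₁ ≤ x₂ → y₁ ≤ y₂ →
      0 ≤ splice φ ψ Γ x₂ y₂ - splice φ ψ Γ x₂ y₁ - splice φ ψ Γ x₁ y₂ + splice φ ψ Γ x₁ y₁ := by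
    intro x₁ x₂ y₁ y₂ hx₁ hx₂ hy₁ hy₂ hx hy
    have ha₁ := hψmem y₁ hy₁
    have ha₂ := hψmem y₂ hy₂
    have haa := hψm y₁ hy₁ y₂ hy₂ hy
    have hyφ₁ : φ (ψ y₁) = y₁ := hφψ y₁ hy₁
    have hyφ₂ : φ (ψ y₂) = y₂ := hφψ y₂ hy₂
    rcases le_or_gt x₂ (ψ y₁) with hc | hc
    · -- all corners in region 2
      have hr : ∀ x ∈ Icc (0:ℝ) 1, x ≤ x₂ → ∀ y, y₁ ≤ y → φ x ≤ y := by
        intro x hxI hxle y hyle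
        have hh : φ x ≤ y₁ := by
          rw [← hyφ₁]
          exact hφm hxI ha₁ (hxle.trans hc)
        linarith
      rw [hSreg2 x₂ hx₂ y₂ (hr x₂ hx₂ le_rfl y₂ hy),
        hSreg2 x₂ hx₂ y₁ (hr x₂ hx₂ le_rfl y₁ le_rfl),
        hSreg2 x₁ hx₁ y₂ (hr x₁ hx₁ hx y₂ hy),
        hSreg2 x₁ hx₁ y₁ (hr x₁ hx₁ hx y₁ le_rfl)]
      linarith [h2inc2 x₁ hx₁ x₂ hx₂ y₁ hy₁ y₂ hy₂ hx hy]
    rcases le_or_gt (ψ y₂) x₁ with hd | hd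
    · -- all corners in region 1
      have hr : ∀ x ∈ Icc (0:ℝ) 1, x₁ ≤ x → ∀ y, y ≤ y₂ → y ≤ φ x := by
        intro x hxI hxle y hyle
        have hh : y₂ ≤ φ x := by
          rw [← hyφ₂]
          exact hφm ha₂ hxI (hd.trans hxle)
        linarith
      rw [hSreg1 x₂ y₂ (hr x₂ hx₂ hx y₂ le_rfl), hSreg1 x₂ y₁ (hr x₂ hx₂ hx y₁ hy),
        hSreg1 x₁ y₂ (hr x₁ hx₁ le_rfl y₂ le_rfl), hSreg1 x₁ y₁ (hr x₁ hx₁ le_rfl y₁ hy)]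
      linarith [h2inc1 x₁ hx₁ x₂ hx₂ y₁ hy₁ y₂ hy₂ hx hy]
    · -- mixed case: split along the curve
      set s := max x₁ (ψ y₁) with hsdef
      set t := min (ψ y₂) x₂ with htdef
      have hx₁s : x₁ ≤ s := le_max_left _ _
      have hst : s ≤ t := max_le (le_min hd.le hx) (le_min haa hc.le)
      have htx₂ : t ≤ x₂ := min_le_right _ _
      have hsI : s ∈ Icc (0:ℝ) 1 := ⟨hx₁.1.trans hx₁s, max_le hx₁.2 ha₁.2⟩
      have htI : t ∈ Icc (0:ℝ) 1 := ⟨hsI.1.trans hst, htx₂.trans hx₂.2⟩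
      have ha₁s : ψ y₁ ≤ s := le_max_right _ _
      have hta₂ : t ≤ ψ y₂ := min_le_left _ _
      have hy₁φs : y₁ ≤ φ s := by
        rw [← hyφ₁]
        exact hφm ha₁ hsI ha₁s
      have hφty₂ : φ t ≤ y₂ := by
        rw [← hyφ₂]
        exact hφm htI ha₂ hta₂
      have hφst : φ s ≤ φ t := hφm hsI htI hst
      have hφsI := hφmem s hsI
      have hφtI := hφmem t htI
      have F2 : 0 ≤ splice φ ψ Γ t (φ s) - splice φ ψ Γ s (φ s)
          - splice φ ψ Γ t y₁ + splice φ ψ Γ s y₁ := by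
        have hr : ∀ x ∈ Icc (0:ℝ) 1, s ≤ x → ∀ y, y ≤ φ s → y ≤ φ x :=
          fun x hxI hxle y hyle => hyle.trans (hφm hsI hxI hxle)
        rw [hSreg1 t (φ s) (hr t htI hst (φ s) le_rfl),
          hSreg1 s (φ s) (hr s hsI le_rfl (φ s) le_rfl),
          hSreg1 t y₁ (hr t htI hst y₁ hy₁φs),
          hSreg1 s y₁ (hr s hsI le_rfl y₁ hy₁φs)]
        linarith [h2inc1 s hsI t htI y₁ hy₁ (φ s) hφsI hst hy₁φs]
      have F4 : 0 ≤ splice φ ψ Γ t y₂ - splice φ ψ Γ s y₂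
          - splice φ ψ Γ t (φ t) + splice φ ψ Γ s (φ t) := by
        have hr : ∀ x ∈ Icc (0:ℝ) 1, x ≤ t → ∀ y, φ t ≤ y → φ x ≤ y :=
          fun x hxI hxle y hyle => (hφm hxI htI hxle).trans hyle
        rw [hSreg2 t htI y₂ (hr t htI le_rfl y₂ hφty₂),
          hSreg2 s hsI y₂ (hr s hsI hst y₂ hφty₂),
          hSreg2 t htI (φ t) (hr t htI le_rfl (φ t) le_rfl),
          hSreg2 s hsI (φ t) (hr s hsI hst (φ t) le_rfl)]
        linarith [h2inc2 s hsI t htI (φ t) hφtI y₂ hy₂ hst hφty₂]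
      have F3 : 0 ≤ splice φ ψ Γ t (φ t) - splice φ ψ Γ s (φ t)
          - splice φ ψ Γ t (φ s) + splice φ ψ Γ s (φ s) := by
        rw [hSreg1 t (φ t) le_rfl, hSreg1 t (φ s) hφst, hSreg1 s (φ s) le_rfl,
          hSreg2 s hsI (φ t) hφst]
        rw [hC1curve t htI, hC1curve s hsI]
        linarith [hmid s hsI t htI hst]
      have F1 : 0 ≤ splice φ ψ Γ s y₂ - splice φ ψ Γ x₁ y₂
          - splice φ ψ Γ s y₁ + splice φ ψ Γ x₁ y₁ := by
        rcases le_total x₁ (ψ y₁) with h | h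
        · have hseq : s = ψ y₁ := max_eq_right h
          have hr : ∀ x ∈ Icc (0:ℝ) 1, x ≤ s → ∀ y, y₁ ≤ y → φ x ≤ y := by
            intro x hxI hxle y hyle
            refine le_trans ?_ hyle
            rw [← hyφ₁]
            exact hφm hxI ha₁ (hxle.trans hseq.le)
          rw [hSreg2 s hsI y₂ (hr s hsI le_rfl y₂ hy),
            hSreg2 x₁ hx₁ y₂ (hr x₁ hx₁ hx₁s y₂ hy),
            hSreg2 s hsI y₁ (hr s hsI le_rfl y₁ le_rfl),
            hSreg2 x₁ hx₁ y₁ (hr x₁ hx₁ hx₁s y₁ le_rfl)]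
          linarith [h2inc2 x₁ hx₁ s hsI y₁ hy₁ y₂ hy₂ hx₁s hy]
        · have hseq : s = x₁ := max_eq_left h
          rw [hseq]
          linarith
      have F5 : 0 ≤ splice φ ψ Γ x₂ y₂ - splice φ ψ Γ t y₂
          - splice φ ψ Γ x₂ y₁ + splice φ ψ Γ t y₁ := by
        rcases le_total (ψ y₂) x₂ with h | h
        · have hteq : t = ψ y₂ := min_eq_left h
          have hr : ∀ x ∈ Icc (0:ℝ) 1, t ≤ x → ∀ y, y ≤ y₂ → y ≤ φ x := by
            intro x hxI hxle y hyle
            refine hyle.trans ?_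
            rw [← hyφ₂]
            exact hφm ha₂ hxI ((le_of_eq hteq.symm).trans hxle)
          rw [hSreg1 x₂ y₂ (hr x₂ hx₂ htx₂ y₂ le_rfl),
            hSreg1 t y₂ (hr t htI le_rfl y₂ le_rfl),
            hSreg1 x₂ y₁ (hr x₂ hx₂ htx₂ y₁ hy),
            hSreg1 t y₁ (hr t htI le_rfl y₁ hy)]
          linarith [h2inc1 t htI x₂ hx₂ y₁ hy₁ y₂ hy₂ htx₂ hy]
        · have hteq : t = x₂ := min_eq_right h
          rw [hteq]
          linarith
      linarith [F1, F2, F3, F4, F5]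
  exact ⟨hrange, fun x hx => ⟨hb1 x hx, hb2 x hx, hb3 x hx, hb4 x hx⟩,
    fun x₁ x₂ y₁ y₂ hx₁ hx₂ hy₁ hy₂ hx hy =>
      hmain x₁ x₂ y₁ y₂ hx₁ hx₂ hy₁ hy₂ hx hy⟩
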